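/- Let F be a filter on ω extending the Fréchet filter, viewed as a subspace of the Cantor space 2^ω. If F is countable dense homogeneous, then F is a non-meager subset of 2^ω. -/

import Mathlib

open Set

/-- A point of the Cantor space `α → Bool`, viewed as a subset of `α`
(the identification of `2^ω` with `𝒫(ω)` via characteristic functions). -/
def toSet {α : Type*} (x : α → Bool) : Set α := {a | x a = true}

/-- The copy of a family `F ⊆ 𝒫(α)` inside the Cantor space `α → Bool`. -/
def cantorCopy {α : Type*} (F : Set (Set α)) : Set (α → Bool) := toSet ⁻¹' F

/-- `F` is a filter on `α`: contains the whole set, not `∅`, closed under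
finite intersections and supersets. -/
def IsFilterOn {α : Type*} (F : Set (Set α)) : Prop :=
  Set.univ ∈ F ∧ ∅ ∉ F ∧ (∀ A B : Set α, A ∈ F → B ∈ F → A ∩ B ∈ F) ∧
    ∀ A B : Set α, A ∈ F → A ⊆ B → B ∈ F

/-- `F` extends the Fréchet filter: every cofinite set belongs to `F`. -/
def ExtendsFrechet {α : Type*} (F : Set (Set α)) : Prop :=
  ∀ A : Set α, Aᶜ.Finite → A ∈ F

/-- `F` is a P-filter: every countable subfamily has a pseudo-intersection in `F`. -/
def IsPFilterOn {α : Type*} (F : Set (Set α)) : Prop :=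
  ∀ X : ℕ → Set α, (∀ n, X n ∈ F) → ∃ Y ∈ F, ∀ n, (Y \ X n).Finite

/-- `F` is non-meager as a subset of the Cantor space `α → Bool`. -/
def NonMeagerFamily {α : Type*} (F : Set (Set α)) : Prop :=
  ¬ IsMeagre (cantorCopy F)

/-- `I` is an ideal on `α`: contains `∅`, not the whole set, closed under
finite unions and subsets. -/
def IsIdealOn {α : Type*} (I : Set (Set α)) : Prop :=
  ∅ ∈ I ∧ Set.univ ∉ I ∧ (∀ A B : Set α, A ∈ I → B ∈ I → A ∪ B ∈ I) ∧
    ∀ A B : Set α, A ∈ I → B ⊆ A → B ∈ I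

/-- `I` contains all finite sets. -/
def ContainsFinites {α : Type*} (I : Set (Set α)) : Prop :=
  ∀ A : Set α, A.Finite → A ∈ I

/-- `I` is a P-ideal: every countable subfamily has a member of `I`
almost containing each of them. -/
def IsPIdealOn {α : Type*} (I : Set (Set α)) : Prop :=
  ∀ X : ℕ → Set α, (∀ n, X n ∈ I) → ∃ Y ∈ I, ∀ n, (X n \ Y).Finite

/-- A topological space is countable dense homogeneous. -/
def CDH (X : Type*) [TopologicalSpace X] : Prop :=
  ∀ D E : Set X, D.Countable → Dense D → E.Countable → Dense E →
    ∃ h : X ≃ₜ X, h '' D = E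

/-- `D` is a (set-theoretic) subfamily of `F` that is dense in `F` with respect to
the subspace topology `F` inherits from the Cantor space. -/
def DenseIn {α : Type*} (D F : Set (Set α)) : Prop :=
  D ⊆ F ∧ cantorCopy F ⊆ closure (cantorCopy D)

/-- If a filter `F` on `ω` extending the Fréchet filter is countable dense homogeneous
(as a subspace of the Cantor space), then `F` is non-meager. -/
def cofinPts : Set (ℕ → Bool) := {y | (toSet y)ᶜ.Finite}

lemma cofinPts_countable : cofinPts.Countable := by
  have hsub : cofinPts ⊆ ⋃ n : ℕ, {y : ℕ → Bool | ∀ a, n ≤ a → y a = true} := by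
    intro y hy
    obtain ⟨n, hn⟩ := (hy : (toSet y)ᶜ.Finite).bddAbove
    refine mem_iUnion.mpr ⟨n + 1, fun a ha => ?_⟩
    by_contra hfalse
    have hmem : a ∈ (toSet y)ᶜ := by simp [toSet, hfalse]
    have := hn hmem
    omega
  refine Set.Countable.mono hsub (countable_iUnion fun n => Set.Finite.countable ?_)
  apply Set.Finite.of_finite_image (f := fun y => fun i : Fin n => y i)
  · exact Set.Finite.subset Set.finite_univ (Set.subset_univ _)
  · intro y hy z hz hyz
    funext a
    by_cases hna : n ≤ a
    · rw [hy a hna, hz a hna]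
    · exact congrFun hyz ⟨a, by omega⟩

lemma infinite_aux (A₀ : Set ℕ) (hA : A₀ᶜ.Infinite) {U : Set (ℕ → Bool)} (hU : IsOpen U)
    {y₀ : ℕ → Bool} (hy₀U : y₀ ∈ U) (hy₀K : ∀ a ∈ A₀, y₀ a = true) :
    {y : ℕ → Bool | y ∈ U ∧ (∀ a ∈ A₀, y a = true) ∧ y ∈ cofinPts}.Infinite := by
  classical
  obtain ⟨I, u, hIu, hIU⟩ := isOpen_pi_iff.mp hU y₀ hy₀U
  set J : Set ℕ := A₀ᶜ \ ↑I with hJ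
  have hJinf : J.Infinite := hA.diff I.finite_toSet
  set w : ℕ → ℕ → Bool := fun m a => if a ∈ I then y₀ a else decide (a ≠ m) with hw
  have hmem : ∀ m ∈ J, w m ∈ {y : ℕ → Bool | y ∈ U ∧ (∀ a ∈ A₀, y a = true) ∧ y ∈ cofinPts} := by
    intro m hm
    refine ⟨hIU ?_, ?_, ?_⟩
    · intro a ha
      have : w m a = y₀ a := by simp only [hw]; rw [if_pos (Finset.mem_coe.mp ha)]
      rw [this]
      exact (hIu a ha).2
    · intro a ha
      by_cases haI : a ∈ I
      · simp only [hw]; rw [if_pos haI]; exact hy₀K a ha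
      · simp only [hw]; rw [if_neg (fun h => haI (Finset.mem_coe.mpr h))]
        have : a ≠ m := fun h => hm.1 (h ▸ ha)
        simp [this]
    · have : (toSet (w m))ᶜ ⊆ ↑I ∪ {m} := by
        intro a ha
        by_contra hout
        rw [mem_union] at hout
        push_neg at hout
        have haI : a ∉ I := hout.1
        have ham : a ≠ m := hout.2
        apply ha
        show w m a = true
        simp only [hw]
        rw [if_neg (fun h => haI (Finset.mem_coe.mpr h))]
        simp [ham]
      exact Set.Finite.subset (I.finite_toSet.union (finite_singleton m)) this
  have hinj : J.InjOn w := by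
    intro m hm m' hm' heq
    by_contra hne
    have h1 : w m m = false := by simp only [hw]; rw [if_neg (fun h => hm.2 (Finset.mem_coe.mpr h))]; simp
    have h2 : w m' m = true := by simp only [hw]; rw [if_neg (fun h => hm.2 (Finset.mem_coe.mpr h))]; simp [hne]
    rw [heq] at h1
    rw [h1] at h2
    exact Bool.false_ne_true h2
  have himg : w '' J ⊆ {y : ℕ → Bool | y ∈ U ∧ (∀ a ∈ A₀, y a = true) ∧ y ∈ cofinPts} := by
    rintro y ⟨m, hm, rfl⟩
    exact hmem m hm
  exact Set.Infinite.mono himg (hJinf.image hinj)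

lemma interior_union_empty {X : Type*} [TopologicalSpace X] {A B : Set X} (hA : IsClosed A)
    (hiA : interior A = ∅) (hiB : interior B = ∅) : interior (A ∪ B) = ∅ := by
  have h1 : interior (A ∪ B) \ A ⊆ interior B := by
    apply interior_maximal ?_ (isOpen_interior.sdiff hA)
    intro y hy
    rcases interior_subset hy.1 with h | h
    · exact absurd h hy.2
    · exact h
  have h2 : interior (A ∪ B) ⊆ A := by
    intro y hy
    by_contra hyA
    have := h1 ⟨hy, hyA⟩
    rw [hiB] at this
    exact this
  have h3 : interior (A ∪ B) ⊆ interior A := interior_maximal h2 isOpen_interior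
  rw [hiA] at h3
  exact eq_empty_iff_forall_notMem.mpr fun x hx => h3 hx

theorem stmt2 (F : Set (Set ℕ)) (hF : IsFilterOn F) (hFr : ExtendsFrechet F)
    (hCDH : CDH ↥(cantorCopy F)) :
    NonMeagerFamily F := by
  intro hM
  classical
  have hE0C : cofinPts ⊆ cantorCopy F := fun y hy => hFr _ hy
  have htrueC : (fun _ : ℕ => true) ∈ cantorCopy F := by
    apply hFr
    have : toSet (fun _ : ℕ => true) = univ := by ext a; simp [toSet]
    rw [this, compl_univ]
    exact finite_empty
  set X := ↥(cantorCopy F) with hX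
  set x₀X : X := ⟨fun _ => true, htrueC⟩ with hx₀X
  by_cases hA : ∃ A ∈ F, Aᶜ.Infinite
  · -- main case
    obtain ⟨A₀, hA₀F, hA₀inf⟩ := hA
    -- meager decomposition
    obtain ⟨S, hSnwd, hScnt, hScov⟩ := isMeagre_iff_countable_union_isNowhereDense.mp hM
    obtain ⟨f, hf⟩ := ((hScnt.image closure).insert ∅).exists_eq_range (insert_nonempty _ _)
    have hfcl : ∀ n, IsClosed (f n) ∧ interior (f n) = ∅ := by
      intro n
      have hmem : f n ∈ insert ∅ (closure '' S) := hf ▸ mem_range_self n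
      rcases hmem with h | ⟨t, ht, hteq⟩
      · rw [h]; exact ⟨isClosed_empty, interior_empty⟩
      · rw [← hteq]; exact ⟨isClosed_closure, hSnwd t ht⟩
    have hcov : cantorCopy F ⊆ ⋃ n, f n := by
      intro x hx
      obtain ⟨t, ht, hxt⟩ := hScov hx
      have : closure t ∈ range f := by rw [← hf]; exact mem_insert_of_mem _ (mem_image_of_mem _ ht)
      obtain ⟨n, hn⟩ := this
      exact mem_iUnion.mpr ⟨n, hn ▸ subset_closure hxt⟩
    -- increasing closed cover with empty interiors
    set g : ℕ → Set (ℕ → Bool) := fun n => Nat.rec (f 0) (fun k ih => ih ∪ f (k + 1)) n with hg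
    have hgsucc : ∀ n, g (n + 1) = g n ∪ f (n + 1) := fun n => rfl
    have hgcl : ∀ n, IsClosed (g n) := by
      intro n; induction n with
      | zero => exact (hfcl 0).1
      | succ k ih => rw [hgsucc]; exact ih.union (hfcl (k + 1)).1
    have hgint : ∀ n, interior (g n) = ∅ := by
      intro n; induction n with
      | zero => exact (hfcl 0).2
      | succ k ih => rw [hgsucc]; exact interior_union_empty (hgcl k) ih (hfcl (k + 1)).2
    have hgmono : ∀ m n, m ≤ n → g m ⊆ g n := by
      intro m n hmn
      induction n with
      | zero => rw [Nat.le_zero.mp hmn]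
      | succ k ih =>
        rcases Nat.le_succ_iff_eq_or_le.mp hmn with h | h
        · rw [h]
        · exact (ih h).trans (by rw [hgsucc]; exact subset_union_left)
    have hfg : ∀ n, f n ⊆ g n := by
      intro n; cases n with
      | zero => exact subset_rfl
      | succ k => rw [hgsucc]; exact subset_union_right
    have hgcov : ∀ x : X, ∃ n, (x : ℕ → Bool) ∈ g n := by
      intro x
      obtain ⟨n, hn⟩ := mem_iUnion.mp (hcov x.2)
      exact ⟨n, hfg n hn⟩
    -- nonempty open sets escape each g k
    have hnm : ∀ (V : Set X), IsOpen V → V.Nonempty → ∀ k,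
        (V \ (Subtype.val ⁻¹' g k)).Nonempty := by
      rintro V hV ⟨x, hxV⟩ k
      obtain ⟨Uamb, hUamb, hpre⟩ := isOpen_induced_iff.mp hV
      have hxUamb : (x : ℕ → Bool) ∈ Uamb := by rw [← hpre] at hxV; exact hxV
      have hW : IsOpen (Uamb \ g k) := hUamb.sdiff (hgcl k)
      have hWne : (Uamb \ g k).Nonempty := by
        by_contra hemp
        push_neg at hemp
        rw [diff_eq_empty] at hemp
        have : (x : ℕ → Bool) ∈ interior (g k) :=
          interior_maximal hemp hUamb hxUamb
        rw [hgint k] at this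
        exact this
      obtain ⟨y₀, hy₀⟩ := hWne
      have hT := infinite_aux ∅ (by rw [compl_empty]; exact infinite_univ) hW hy₀
        (fun a ha => absurd ha (notMem_empty a))
      obtain ⟨y, hyU, -, hycof⟩ := hT.nonempty
      refine ⟨⟨y, hE0C hycof⟩, ?_, ?_⟩
      · rw [← hpre]; exact hyU.1
      · exact fun h => hyU.2 h
    -- countable dense D escaping the cover
    obtain ⟨b, hbcnt, hbne, hbbasis⟩ := TopologicalSpace.exists_countable_basis X
    obtain ⟨e, he⟩ := (hbcnt.insert ∅).exists_eq_range (insert_nonempty _ _)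
    set d : ℕ → X := fun n =>
      if h : (e n).Nonempty ∧ IsOpen (e n) then (hnm (e n) h.2 h.1 n).choose
      else (hnm univ isOpen_univ ⟨x₀X, trivial⟩ n).choose with hd
    have hd1 : ∀ n, d n ∉ Subtype.val ⁻¹' g n := by
      intro n
      by_cases h : (e n).Nonempty ∧ IsOpen (e n)
      · rw [hd]; simp only [dif_pos h]; exact (hnm (e n) h.2 h.1 n).choose_spec.2
      · rw [hd]; simp only [dif_neg h]
        exact (hnm univ isOpen_univ ⟨x₀X, trivial⟩ n).choose_spec.2
    have hd2 : ∀ n, (e n).Nonempty → IsOpen (e n) → d n ∈ e n := by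
      intro n h1 h2
      rw [hd]; simp only [dif_pos (⟨h1, h2⟩ : (e n).Nonempty ∧ IsOpen (e n))]
      exact (hnm (e n) h2 h1 n).choose_spec.1
    set D : Set X := range d with hD
    have hDcnt : D.Countable := countable_range d
    have hDdense : Dense D := by
      rw [dense_iff_inter_open]
      rintro U hU ⟨x, hxU⟩
      obtain ⟨v, hvb, hxv, hvU⟩ := hbbasis.exists_subset_of_mem_open hxU hU
      have : v ∈ range e := by rw [← he]; exact mem_insert_of_mem _ hvb
      obtain ⟨n, rfl⟩ := this
      exact ⟨d n, hvU (hd2 n ⟨x, hxv⟩ (hbbasis.isOpen hvb)), mem_range_self n⟩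
    have hDfin : ∀ N, (D ∩ Subtype.val ⁻¹' g N).Finite := by
      intro N
      apply Set.Finite.subset ((finite_Iio N).image d)
      rintro x ⟨⟨k, rfl⟩, hk⟩
      refine mem_image_of_mem d ?_
      by_contra hkN
      rw [mem_Iio, not_lt] at hkN
      exact absurd (hgmono N k hkN hk) (hd1 k)
    -- the compact set K and the dense set E
    set K : Set (ℕ → Bool) := {y | ∀ a ∈ A₀, y a = true} with hK
    have hKC : K ⊆ cantorCopy F := by
      intro y hy
      refine hF.2.2.2 A₀ (toSet y) hA₀F ?_
      intro a ha
      exact hy a ha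
    have hKcl : IsClosed K := by
      have : K = Set.pi A₀ (fun _ => ({true} : Set Bool)) := by
        ext y; simp [hK, Set.mem_pi]
      rw [this]
      exact isClosed_set_pi fun a _ => isClosed_singleton
    have hKcomp : IsCompact K := hKcl.isCompact
    set EK : Set X := Subtype.val ⁻¹' (K ∩ cofinPts) with hEK
    set E : Set X := D ∪ EK with hE
    have hEcnt : E.Countable :=
      hDcnt.union (((cofinPts_countable.mono inter_subset_right)).preimage Subtype.val_injective)
    have hEdense : Dense E := hDdense.mono subset_union_left
    obtain ⟨h, himg⟩ := hCDH D E hDcnt hDdense hEcnt hEdense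
    -- images of the cover under h
    have hGcl : ∀ n, IsClosed (h '' (Subtype.val ⁻¹' g n)) :=
      fun n => (Homeomorph.isClosedMap h) _ ((hgcl n).preimage continuous_subtype_val)
    have hGamb := fun n => isClosed_induced_iff.mp (hGcl n)
    choose Gamb hGambcl hGambpre using hGamb
    -- K is covered by the Gamb n
    have hKcover : ∀ y ∈ K, ∃ n, y ∈ Gamb n := by
      intro y hy
      set x : X := ⟨y, hKC hy⟩ with hx
      obtain ⟨x', hx'⟩ := h.surjective x
      obtain ⟨n, hn⟩ := hgcov (h.symm x)
      refine ⟨n, ?_⟩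
      have hmem : x ∈ h '' (Subtype.val ⁻¹' g n) := ⟨h.symm x, hn, h.apply_symm_apply x⟩
      rw [← hGambpre n] at hmem
      exact hmem
    -- Baire category on the compact set K
    haveI : CompactSpace ↥K := isCompact_iff_compactSpace.mp hKcomp
    haveI : Nonempty ↥K := ⟨⟨fun _ => true, fun a _ => rfl⟩⟩
    haveI : BaireSpace ↥K := BaireSpace.of_t2Space_locallyCompactSpace
    have hWcl : ∀ n, IsClosed ((Subtype.val : ↥K → ℕ → Bool) ⁻¹' Gamb n) :=
      fun n => (hGambcl n).preimage continuous_subtype_val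
    have hWunion : ⋃ n, ((Subtype.val : ↥K → ℕ → Bool) ⁻¹' Gamb n) = univ := by
      rw [eq_univ_iff_forall]
      intro z
      obtain ⟨n, hn⟩ := hKcover z.1 z.2
      exact mem_iUnion.mpr ⟨n, hn⟩
    obtain ⟨N, hNint⟩ := nonempty_interior_of_iUnion_of_closed hWcl hWunion
    obtain ⟨z₀, hz₀⟩ := hNint
    obtain ⟨Uamb, hUambopen, hUambpre⟩ := isOpen_induced_iff.mp
      (isOpen_interior (s := (Subtype.val : ↥K → ℕ → Bool) ⁻¹' Gamb N))
    have hz₀Uamb : (z₀ : ℕ → Bool) ∈ Uamb := by rw [← hUambpre] at hz₀; exact hz₀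
    have hsubUamb : ∀ y ∈ Uamb, y ∈ K → y ∈ Gamb N := by
      intro y hyUamb hyK
      have : (⟨y, hyK⟩ : ↥K) ∈ interior ((Subtype.val : ↥K → ℕ → Bool) ⁻¹' Gamb N) := by
        rw [← hUambpre]; exact hyUamb
      have h2 : (⟨y, hyK⟩ : ↥K) ∈ (Subtype.val ⁻¹' Gamb N : Set ↥K) := interior_subset this
      exact h2
    -- infinitely many points of E in Gamb N
    have hTinf := infinite_aux A₀ hA₀inf hUambopen hz₀Uamb (fun a ha => z₀.2 a ha)
    have hTsub : {y : ℕ → Bool | y ∈ Uamb ∧ (∀ a ∈ A₀, y a = true) ∧ y ∈ cofinPts} ⊆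
        Subtype.val '' (E ∩ h '' (Subtype.val ⁻¹' g N)) := by
      rintro y ⟨hyUamb, hyK, hycof⟩
      refine ⟨⟨y, hE0C hycof⟩, ⟨?_, ?_⟩, rfl⟩
      · exact Or.inr (mem_preimage.mpr ⟨hyK, hycof⟩)
      · rw [← hGambpre N]
        exact hsubUamb y hyUamb hyK
    have hfin : (Subtype.val '' (E ∩ h '' (Subtype.val ⁻¹' g N))).Finite := by
      have heq : E ∩ h '' (Subtype.val ⁻¹' g N) = h '' (D ∩ Subtype.val ⁻¹' g N) := by
        rw [← himg, ← Set.image_inter h.injective]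
      rw [heq]
      exact (((hDfin N).image h)).image Subtype.val
    exact absurd (hfin.subset hTsub) hTinf
  · -- countable case
    push_neg at hA
    have hCsub : cantorCopy F ⊆ cofinPts := by
      intro y hy
      exact hA (toSet y) hy
    haveI : Countable X := (cofinPts_countable.mono hCsub).to_subtype
    set E : Set X := univ \ {x₀X} with hE
    have hEdense : Dense E := by
      rw [dense_iff_inter_open]
      rintro U hU ⟨x, hxU⟩
      obtain ⟨Uamb, hUamb, hpre⟩ := isOpen_induced_iff.mp hU
      have hxUamb : (x : ℕ → Bool) ∈ Uamb := by rw [← hpre] at hxU; exact hxU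
      have hTinf := infinite_aux ∅ (by rw [compl_empty]; exact infinite_univ) hUamb hxUamb
        (fun a ha => absurd ha (notMem_empty a))
      obtain ⟨y, hy⟩ := (hTinf.diff (finite_singleton (fun _ => true))).nonempty
      obtain ⟨⟨hyUamb, -, hycof⟩, hyne⟩ := hy
      refine ⟨⟨y, hE0C hycof⟩, ?_, trivial, ?_⟩
      · rw [← hpre]; exact hyUamb
      · intro hmem
        rw [mem_singleton_iff] at hmem
        apply hyne
        rw [mem_singleton_iff]
        exact Subtype.ext_iff.mp hmem
    obtain ⟨h, himg⟩ := hCDH univ E countable_univ dense_univ (countable_univ.mono (diff_subset)) hEdense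
    have : x₀X ∈ E := by
      rw [← himg, image_univ, h.surjective.range_eq]
      trivial
    exact this.2 rfl
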